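/- Let f : X → X be a synchronous r-cyclic contraction with respect to a closed covering X = X_1 ∪ ... ∪ X_m of a complete metric space, with gcd(m, r) = k > 1, and let Y_j = ⋃_{i=0}^{m/k−1} X_{j+i·r}. If the sets Y_1, ..., Y_k are pairwise disjoint, then f has exactly k fixed points, one in each Y_j. -/

import Mathlib

theorem synchronous_disjoint_circuits_exactly_k_fixed_points {α : Type*} [MetricSpace α]
    [CompleteSpace α]
    (m r k : ℕ) (hm : 2 ≤ m) (hr : 1 ≤ r) (hrm : r < m)
    (hk : k = Nat.gcd m r) (hk1 : 1 < k)
    (X : ZMod m → Set α) (hne : ∀ i, (X i).Nonempty) (hcl : ∀ i, IsClosed (X i))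
    (hcov : (⋃ i, X i) = Set.univ) (f : α → α)
    (hcyc : ∀ i, ∀ x ∈ X i, f x ∈ X (i + (r : ZMod m)))
    (c : ℝ) (hc0 : 0 ≤ c) (hc1 : c < 1)
    (hcontr : ∀ i, ∀ x ∈ X i, ∀ y ∈ X (i + (r : ZMod m)),
      dist (f x) (f y) ≤ c * dist x y)
    (Y : ℕ → Set α)
    (hY : ∀ j, Y j = ⋃ i ∈ Finset.range (m / k), X ((j : ZMod m) + ((i * r : ℕ) : ZMod m)))
    (hdisj : ∀ j₁ < k, ∀ j₂ < k, j₁ ≠ j₂ → Disjoint (Y j₁) (Y j₂)) :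
    ∃ F : Fin k → α, (∀ j : Fin k, f (F j) = F j ∧ F j ∈ Y j) ∧
      Function.Injective F ∧ ∀ x : α, f x = x → ∃ j : Fin k, x = F j := by
  haveI : NeZero m := ⟨by omega⟩
  have hkpos : 0 < k := by omega
  have hkm : k ∣ m := hk ▸ Nat.gcd_dvd_left m r
  have hkr : k ∣ r := hk ▸ Nat.gcd_dvd_right m r
  have hmk : 0 < m / k := Nat.div_pos (Nat.le_of_dvd (by omega) hkm) hkpos
  have hmkr : ((m / k * r : ℕ) : ZMod m) = 0 := by
    obtain ⟨s, rfl⟩ := hkr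
    have hdvd : m ∣ m / k * (k * s) := ⟨s, by rw [← mul_assoc, Nat.div_mul_cancel hkm]⟩
    exact (ZMod.natCast_eq_zero_iff _ _).mpr hdvd
  -- iterate membership
  have hiter : ∀ (i : ZMod m) (x : α), x ∈ X i → ∀ n : ℕ,
      f^[n] x ∈ X (i + ((n * r : ℕ) : ZMod m)) := by
    intro i x hx n
    induction n with
    | zero => simpa using hx
    | succ n ih =>
      have hidx : i + (((n + 1) * r : ℕ) : ZMod m)
          = (i + ((n * r : ℕ) : ZMod m)) + (r : ZMod m) := by push_cast; ring
      rw [Function.iterate_succ_apply', hidx]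
      exact hcyc _ _ ih
  have hfix_mem : ∀ x, f x = x → ∀ i, x ∈ X i → ∀ t : ℕ,
      x ∈ X (i + ((t * r : ℕ) : ZMod m)) := by
    intro x hfx i hx t
    have h := hiter i x hx t
    rwa [Function.iterate_fixed hfx] at h
  -- two fixed points in adjacent sets coincide
  have hadj : ∀ (i : ZMod m) (x y : α), f x = x → f y = y →
      x ∈ X i → y ∈ X (i + (r : ZMod m)) → x = y := by
    intro i x y hfx hfy hx hy
    have h := hcontr i x hx y hy
    rw [hfx, hfy] at h
    have h0 : dist x y ≤ 0 := by nlinarith [dist_nonneg (x := x) (y := y)]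
    exact dist_le_zero.mp h0
  -- existence of a fixed point in each X i
  have hexists : ∀ i : ZMod m, ∃ p, f p = p ∧ p ∈ X i := by
    intro i
    obtain ⟨x₀, hx₀⟩ := hne i
    set u : ℕ → α := fun n => f^[n] x₀ with hu
    have humem : ∀ n, u n ∈ X (i + ((n * r : ℕ) : ZMod m)) := fun n => hiter i x₀ hx₀ n
    have hstep : ∀ n, u (n + 1) = f (u n) := fun n => Function.iterate_succ_apply' f n x₀
    have hgeo : ∀ n, dist (u n) (u (n + 1)) ≤ dist x₀ (f x₀) * c ^ n := by
      intro n
      induction n with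
      | zero => simp [hu, hstep, Function.iterate_one]
      | succ n ih =>
        have hmem2 : u (n + 1) ∈ X ((i + ((n * r : ℕ) : ZMod m)) + (r : ZMod m)) := by
          have h := humem (n + 1)
          have hidx : i + (((n + 1) * r : ℕ) : ZMod m)
              = (i + ((n * r : ℕ) : ZMod m)) + (r : ZMod m) := by push_cast; ring
          rwa [hidx] at h
        have h := hcontr _ _ (humem n) _ hmem2
        rw [← hstep, ← hstep] at h
        calc dist (u (n + 1)) (u (n + 2)) ≤ c * dist (u n) (u (n + 1)) := h
          _ ≤ c * (dist x₀ (f x₀) * c ^ n) := mul_le_mul_of_nonneg_left ih hc0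
          _ = dist x₀ (f x₀) * c ^ (n + 1) := by ring
    have hcauchy : CauchySeq u := cauchySeq_of_le_geometric c _ hc1 hgeo
    obtain ⟨p, hp⟩ := cauchySeq_tendsto_of_complete hcauchy
    have hP : ∀ a : ℕ, p ∈ X (i + ((a * r : ℕ) : ZMod m)) := by
      intro a
      have hmono : Filter.Tendsto (fun t : ℕ => a + t * m) Filter.atTop Filter.atTop := by
        apply Filter.tendsto_atTop_atTop.mpr
        intro b
        exact ⟨b, fun t ht => by
          have h1 : t ≤ t * m := Nat.le_mul_of_pos_right t (by omega)
          omega⟩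
      refine (hcl _).mem_of_tendsto (hp.comp hmono) (Filter.Eventually.of_forall fun t => ?_)
      have h := humem (a + t * m)
      have hidx : i + (((a + t * m) * r : ℕ) : ZMod m) = i + ((a * r : ℕ) : ZMod m) := by
        push_cast
        simp [ZMod.natCast_self]
      rwa [hidx] at h
    have hfp : f p = p := by
      have h1 : Filter.Tendsto (fun n : ℕ => dist p (u n)) Filter.atTop (nhds 0) := by
        simpa [dist_comm] using tendsto_iff_dist_tendsto_zero.mp hp
      have h2 : Filter.Tendsto (fun n : ℕ => dist (u (n + 1)) p) Filter.atTop (nhds 0) := by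
        simpa using tendsto_iff_dist_tendsto_zero.mp
          (hp.comp (Filter.tendsto_add_atTop_nat 1))
      have hdist : Filter.Tendsto (fun n : ℕ => c * dist p (u n) + dist (u (n + 1)) p)
          Filter.atTop (nhds 0) := by
        simpa using (h1.const_mul c).add h2
      have hbound : ∀ᶠ n in Filter.atTop,
          dist (f p) p ≤ c * dist p (u n) + dist (u (n + 1)) p := by
        filter_upwards [Filter.eventually_ge_atTop 1] with n hn
        obtain ⟨n', rfl⟩ : ∃ n', n = n' + 1 := ⟨n - 1, by omega⟩
        have hpmem : p ∈ X (i + ((n' * r : ℕ) : ZMod m)) := hP n'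
        have humem' : u (n' + 1) ∈ X ((i + ((n' * r : ℕ) : ZMod m)) + (r : ZMod m)) := by
          have h := humem (n' + 1)
          have hidx : i + (((n' + 1) * r : ℕ) : ZMod m)
              = (i + ((n' * r : ℕ) : ZMod m)) + (r : ZMod m) := by push_cast; ring
          rwa [hidx] at h
        have h := hcontr _ _ hpmem _ humem'
        calc dist (f p) p ≤ dist (f p) (u (n' + 2)) + dist (u (n' + 2)) p := dist_triangle _ _ _
          _ ≤ c * dist p (u (n' + 1)) + dist (u (n' + 2)) p := by
              have hstep2 : u (n' + 2) = f (u (n' + 1)) := hstep (n' + 1)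
              rw [hstep2]
              exact add_le_add_left h _
      have hle : dist (f p) p ≤ 0 := ge_of_tendsto hdist hbound
      have : dist (f p) p = 0 := le_antisymm hle dist_nonneg
      exact dist_eq_zero.mp this
    refine ⟨p, hfp, ?_⟩
    simpa using hP 0
  -- membership in Y j
  have hYmem' : ∀ (j t : ℕ) (x : α),
      x ∈ X (((j : ℕ) : ZMod m) + ((t * r : ℕ) : ZMod m)) → x ∈ Y j := by
    intro j t x hx
    rw [hY]
    refine Set.mem_iUnion₂.mpr ⟨t % (m / k), Finset.mem_range.mpr (Nat.mod_lt _ hmk), ?_⟩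
    have hcast : ((t * r : ℕ) : ZMod m) = ((t % (m / k) * r : ℕ) : ZMod m) := by
      conv_lhs => rw [← Nat.div_add_mod t (m / k)]
      push_cast at hmkr ⊢
      linear_combination ((t / (m / k) : ℕ) : ZMod m) * hmkr
    rwa [hcast] at hx
  have hYmem : ∀ (j : ℕ) (x : α), x ∈ X ((j : ZMod m)) → x ∈ Y j := by
    intro j x hx
    refine hYmem' j 0 x ?_
    simpa using hx
  -- uniqueness within Y j
  have huniq : ∀ (j : ℕ) (x y : α), f x = x → f y = y → x ∈ Y j → y ∈ Y j → x = y := by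
    intro j x y hfx hfy hxY hyY
    rw [hY] at hxY hyY
    obtain ⟨a, -, hxa⟩ := Set.mem_iUnion₂.mp hxY
    obtain ⟨b, -, hyb⟩ := Set.mem_iUnion₂.mp hyY
    have hx2 : x ∈ X (((j : ℕ) : ZMod m) + (((a + b) * r : ℕ) : ZMod m)) := by
      have h := hfix_mem x hfx _ hxa b
      have hidx : ((j : ℕ) : ZMod m) + ((a * r : ℕ) : ZMod m) + ((b * r : ℕ) : ZMod m)
          = ((j : ℕ) : ZMod m) + (((a + b) * r : ℕ) : ZMod m) := by push_cast; ring
      rwa [hidx] at h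
    have hy2 : y ∈ X ((((j : ℕ) : ZMod m) + (((a + b) * r : ℕ) : ZMod m)) + (r : ZMod m)) := by
      have h := hfix_mem y hfy _ hyb (a + 1)
      have hidx : ((j : ℕ) : ZMod m) + ((b * r : ℕ) : ZMod m) + (((a + 1) * r : ℕ) : ZMod m)
          = (((j : ℕ) : ZMod m) + (((a + b) * r : ℕ) : ZMod m)) + (r : ZMod m) := by
        push_cast; ring
      rwa [hidx] at h
    exact hadj _ x y hfx hfy hx2 hy2
  choose F hFfix hFX using fun j : Fin k => hexists (((j : ℕ) : ZMod m))
  have hFY : ∀ j : Fin k, F j ∈ Y (j : ℕ) := fun j => hYmem _ _ (hFX j)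
  refine ⟨F, fun j => ⟨hFfix j, hFY j⟩, ?_, ?_⟩
  · intro j₁ j₂ hF
    by_contra hne'
    exact Set.disjoint_left.mp (hdisj _ j₁.2 _ j₂.2 (fun h => hne' (Fin.ext h)))
      (hFY j₁) (hF ▸ hFY j₂)
  · intro x hfx
    have hxU : x ∈ ⋃ i, X i := hcov ▸ Set.mem_univ x
    obtain ⟨i, hi⟩ := Set.mem_iUnion.mp hxU
    set j := i.val % k with hjdef
    have hjk : j < k := Nat.mod_lt _ hkpos
    have hkz : ((k : ℕ) : ZMod m) = (r : ZMod m) * ((Nat.gcdB m r : ℤ) : ZMod m) := by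
      have h1 : (k : ℤ) = (m : ℤ) * Nat.gcdA m r + (r : ℤ) * Nat.gcdB m r := by
        rw [hk]; exact Nat.gcd_eq_gcd_ab m r
      have h2 := congrArg (fun z : ℤ => ((z : ℤ) : ZMod m)) h1
      push_cast at h2
      simpa [ZMod.natCast_self] using h2
    obtain ⟨q, hq⟩ : ∃ q : ℕ, i.val = j + k * q :=
      ⟨i.val / k, by have := Nat.div_add_mod i.val k; omega⟩
    set β : ZMod m := ((Nat.gcdB m r : ℤ) : ZMod m) with hβ
    obtain ⟨t, ht⟩ : ∃ t : ℕ, ((t : ℕ) : ZMod m) = β * ((q : ℕ) : ZMod m) :=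
      ⟨(β * ((q : ℕ) : ZMod m)).val, by simp [ZMod.natCast_val, ZMod.cast_id]⟩
    have h3 : ((t * r : ℕ) : ZMod m) = β * ((q : ℕ) : ZMod m) * (r : ZMod m) := by
      push_cast
      rw [ht]
    have hchain : i = ((j : ℕ) : ZMod m) + ((k : ℕ) : ZMod m) * ((q : ℕ) : ZMod m) := by
      have h4 : ((i.val : ℕ) : ZMod m) = i := by simp [ZMod.natCast_val, ZMod.cast_id]
      calc i = ((i.val : ℕ) : ZMod m) := h4.symm
        _ = _ := by rw [hq]; push_cast; ring
    have hit : i = ((j : ℕ) : ZMod m) + ((t * r : ℕ) : ZMod m) := by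
      rw [h3, hchain, hkz]; ring
    have hxmem : x ∈ X (((j : ℕ) : ZMod m) + ((t * r : ℕ) : ZMod m)) := hit ▸ hi
    have hxY : x ∈ Y j := hYmem' j t x hxmem
    exact ⟨⟨j, hjk⟩, huniq j x (F ⟨j, hjk⟩) hfx (hFfix _) hxY (hFY ⟨j, hjk⟩)⟩
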